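/- Let k ∈ ℕ, fix i with 1 ≤ i ≤ k−1 and t_i ∈ ℂ nonzero. Define ψ₀(ζ^m v^n) = z^{nk−m} u^n and ψ₁(ζ^m v^n) = n t_i z^{(n−1)k − m + i} u^{n−1} as linear maps ℂ[ζ,v] → ℂ[z^{±1}, u], and let {f,g} denote the Poisson bracket with {z^a u^b, z^c u^d} = (ad−bc) z^{a+c} u^{b+d} on ℂ[z^{±1},u] and {ζ^a v^b, ζ^c v^d} = −(ad−bc) ζ^{a+c} v^{b+d} on ℂ[ζ,v]. Then ψ₁({ζ^a v^b, ζ^c v^d}) − {ψ₀(ζ^a v^b), ψ₁(ζ^c v^d)} − {ψ₁(ζ^a v^b), ψ₀(ζ^c v^d)} = −(ad − bc) t_i z^{(b+d−1)k − (a+c) + i} u^{b+d−1}; in particular it is nonzero whenever ad ≠ bc. -/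

import Mathlib

/-!
Statement 11: the second-order obstruction cocycle
`ψ₁({−,−}) − {ψ₀(−), ψ₁(−)} − {ψ₁(−), ψ₀(−)}` for the simultaneous commutative /
noncommutative deformation of `Z_k` evaluates on monomials to
`−(ad − bc) t_i z^{(b+d−1)k − (a+c) + i} u^{b+d−1}`, which is nonzero whenever `ad ≠ bc`.

`ℂ[z^{±1}, u]` is realized as `AddMonoidAlgebra ℂ (ℤ × ℕ)`, `z^e u^n ↦ single (e,n) 1`;
`ℂ[ζ, v]` as `MvPolynomial (Fin 2) ℂ` with `ζ = X 0`, `v = X 1`.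
-/

noncomputable section

abbrev LaurR : Type := AddMonoidAlgebra ℂ (ℤ × ℕ)

/-- The monomial `c · z^e u^n`. -/
def mon (e : ℤ) (n : ℕ) (c : ℂ) : LaurR := AddMonoidAlgebra.single (e, n) c


lemma mon_smul (x : ℂ) (e : ℤ) (n : ℕ) (c : ℂ) : x • mon e n c = mon e n (x * c) := by
  simp [mon, AddMonoidAlgebra.smul_single']

lemma mon_eq_smul (e : ℤ) (n : ℕ) (c : ℂ) : mon e n c = c • mon e n 1 := by
  rw [mon_smul, mul_one]

lemma mon_zero (e : ℤ) (n : ℕ) : mon e n 0 = 0 := by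
  simp [mon]

lemma mon_sub (e : ℤ) (n : ℕ) (c₁ c₂ : ℂ) : mon e n c₁ - mon e n c₂ = mon e n (c₁ - c₂) := by
  simp [mon, AddMonoidAlgebra.single_sub]

lemma mon_duo {e₁ e₂ e : ℤ} {n₁ n₂ n : ℕ} {c₁ c₂ c : ℂ} (h1 : e₁ = e) (h2 : e₂ = e)
    (hn1 : n₁ = n) (hn2 : n₂ = n) (hc : c₁ - c₂ = c) :
    mon e₁ n₁ c₁ - mon e₂ n₂ c₂ = mon e n c := by subst_vars; rw [mon_sub]

lemma mon_tri {e₁ e₂ e₃ e : ℤ} {n₁ n₂ n₃ n : ℕ} {c₁ c₂ c₃ c : ℂ} (h1 : e₁ = e) (h2 : e₂ = e)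
    (h3 : e₃ = e) (hn1 : n₁ = n) (hn2 : n₂ = n) (hn3 : n₃ = n) (hc : c₁ - c₂ - c₃ = c) :
    mon e₁ n₁ c₁ - mon e₂ n₂ c₂ - mon e₃ n₃ c₃ = mon e n c := by
  subst_vars; rw [mon_sub, mon_sub]

theorem stmt11 (k i : ℕ) (hi1 : 1 ≤ i) (hik : i ≤ k - 1) (t : ℂ) (ht : t ≠ 0)
    -- ψ₀ and ψ₁, linear maps determined on monomials as stated
    (psi0 psi1 : MvPolynomial (Fin 2) ℂ →ₗ[ℂ] LaurR)
    (h0 : ∀ m n : ℕ, psi0 (MvPolynomial.X 0 ^ m * MvPolynomial.X 1 ^ n)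
      = mon ((n : ℤ) * k - m) n 1)
    (h1 : ∀ m n : ℕ, psi1 (MvPolynomial.X 0 ^ m * MvPolynomial.X 1 ^ n)
      = mon (((n : ℤ) - 1) * k - m + i) (n - 1) ((n : ℂ) * t))
    -- the Poisson bracket on ℂ[z^{±1}, u]: {z^a u^b, z^c u^d} = (ad − bc) z^{a+c} u^{b+d}
    (brW : LaurR →ₗ[ℂ] LaurR →ₗ[ℂ] LaurR)
    (hbrW : ∀ (a c : ℤ) (b d : ℕ), brW (mon a b 1) (mon c d 1)
      = mon (a + c) (b + d) ((a * d - b * c : ℤ)))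
    (a b c d : ℕ) :
    -- ψ₁({ζ^a v^b, ζ^c v^d}) − {ψ₀(ζ^a v^b), ψ₁(ζ^c v^d)} − {ψ₁(ζ^a v^b), ψ₀(ζ^c v^d)}
    -- where {ζ^a v^b, ζ^c v^d} = −(ad−bc) ζ^{a+c} v^{b+d}
    (psi1 ((-((a * d - b * c : ℤ) : ℂ)) •
        (MvPolynomial.X 0 ^ (a + c) * MvPolynomial.X 1 ^ (b + d)))
      - brW (psi0 (MvPolynomial.X 0 ^ a * MvPolynomial.X 1 ^ b))
          (psi1 (MvPolynomial.X 0 ^ c * MvPolynomial.X 1 ^ d))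
      - brW (psi1 (MvPolynomial.X 0 ^ a * MvPolynomial.X 1 ^ b))
          (psi0 (MvPolynomial.X 0 ^ c * MvPolynomial.X 1 ^ d))
      = mon (((b : ℤ) + d - 1) * k - (a + c) + i) (b + d - 1)
          (-((a * d - b * c : ℤ) : ℂ) * t)) ∧
    ((a : ℤ) * d ≠ (b : ℤ) * c →
      psi1 ((-((a * d - b * c : ℤ) : ℂ)) •
          (MvPolynomial.X 0 ^ (a + c) * MvPolynomial.X 1 ^ (b + d)))
        - brW (psi0 (MvPolynomial.X 0 ^ a * MvPolynomial.X 1 ^ b))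
            (psi1 (MvPolynomial.X 0 ^ c * MvPolynomial.X 1 ^ d))
        - brW (psi1 (MvPolynomial.X 0 ^ a * MvPolynomial.X 1 ^ b))
            (psi0 (MvPolynomial.X 0 ^ c * MvPolynomial.X 1 ^ d)) ≠ 0) := by
  have hbr : ∀ (x y : ℂ) (p q : ℤ) (m n : ℕ), brW (mon p m x) (mon q n y)
      = mon (p + q) (m + n) (x * (y * ((p * n - m * q : ℤ) : ℂ))) := by
    intro x y p q m n
    rw [mon_eq_smul p m x, mon_eq_smul q n y, LinearMap.map_smul₂, map_smul,
      hbrW, mon_smul, mon_smul]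
  have key : psi1 ((-((a * d - b * c : ℤ) : ℂ)) •
        (MvPolynomial.X 0 ^ (a + c) * MvPolynomial.X 1 ^ (b + d)))
      - brW (psi0 (MvPolynomial.X 0 ^ a * MvPolynomial.X 1 ^ b))
          (psi1 (MvPolynomial.X 0 ^ c * MvPolynomial.X 1 ^ d))
      - brW (psi1 (MvPolynomial.X 0 ^ a * MvPolynomial.X 1 ^ b))
          (psi0 (MvPolynomial.X 0 ^ c * MvPolynomial.X 1 ^ d))
      = mon (((b : ℤ) + d - 1) * k - (a + c) + i) (b + d - 1)
          (-((a * d - b * c : ℤ) : ℂ) * t) := by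
    rw [map_smul, h1 (a+c) (b+d), h1 a b, h1 c d, h0 a b, h0 c d, hbr, hbr, mon_smul]
    rcases b with _ | b <;> rcases d with _ | d <;>
      simp only [Nat.cast_zero, zero_mul, mul_zero, zero_sub, Nat.zero_sub, Nat.add_sub_cancel,
        Nat.add_zero, Nat.zero_add, mon_zero, sub_zero, zero_smul, Nat.sub_zero,
        Nat.succ_sub_one]
    · simp [mon_zero]
    · exact mon_duo (by push_cast; ring) (by push_cast; ring) rfl rfl (by push_cast; ring)
    · exact mon_duo (by push_cast; ring) (by push_cast; ring) rfl rfl (by push_cast; ring)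
    · exact mon_tri (by push_cast; ring) (by push_cast; ring) (by push_cast; ring)
        (by omega) (by omega) (by omega) (by push_cast; ring)
  refine ⟨key, fun hne => ?_⟩
  have hc : (-((a * d - b * c : ℤ) : ℂ) * t) ≠ 0 :=
    mul_ne_zero (neg_ne_zero.mpr (Int.cast_ne_zero.mpr (sub_ne_zero.mpr hne))) ht
  rw [key]
  exact fun h => hc (AddMonoidAlgebra.single_eq_zero.mp h)

end
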